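/- arXiv:0709.3448 — 3 statements merged into one kernel-verified Lean document; each statement's English description precedes it below -/
import Mathlib

section
/- Assume A4 (for all k ≥ 0, ‖g_k‖_∞ < ∞ and ‖Φ_k‖_∞ < ∞). Let {A_k} and {Ã_k} be the families of function sets defined recursively by A_{k+1} := { f ∈ L²(X^{k+2}, π_{k+1|k+1}) : R̄_k(·, Φ_{k+1}|f|)·U_k(·, |f|) ∈ L¹(π_{k|k}), U_k(·, |f|) ∈ A_k ∩ L²(π_{k|k}), Φ_{k+1} f² ∈ L¹(π_{k+1|k+1}) } and Ã_{k+1} := { f ∈ L¹(X^{k+2}, π_{k+1|k+1}) : R̄_k(·, Φ_{k+1}|f|)·U_k(·, |f|) ∈ L¹(π_{k|k}), U_k(·, |f|) ∈ Ã_k, [U_k(·, |f|)]² ∈ W̃_k, Φ_{k+1} f² ∈ L¹(π_{k+1|k+1}) }, where W̃_k := { f ∈ L¹(π_{k|k}) : Φ_k f ∈ L¹(π_{k|k}) }, with Ã₀ = A₀ := L²(X, π_{0|0}). Then for all k ≥ 1, A_k = L²(X^{k+1}, π_{k|k}) and L²(X^{k+1}, π_{k|k}) ⊆ Ã_k. 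-/
open MeasureTheory ProbabilityTheory Filter
open scoped ENNReal NNReal Topology

noncomputable section

namespace APF

variable {X : Type*} [MeasurableSpace X]

/-- The path space `X^{k+1}`. -/
abbrev Path (X : Type*) (k : ℕ) := Fin (k + 1) → X

/-- Normalisation of a measure. -/
def normalize {E : Type*} [MeasurableSpace E] (μ : Measure E) : Measure E :=
  (μ Set.univ)⁻¹ • μ

/-- The unnormalised one-step kernel `U_k` from `X^{k+1}` to `X^{k+2}`. -/
def Uker (Q : X → Measure X) (g : ℕ → X → ℝ≥0∞) (k : ℕ) (x : Path X k) :
    Measure (Path X (k + 1)) :=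
  ((Q (x (Fin.last k))).withDensity (g (k + 1))).map (Fin.snoc x)

/-- `Ū_k` as an extended nonnegative real. -/
def UbarE (Q : X → Measure X) (g : ℕ → X → ℝ≥0∞) (k : ℕ) (x : Path X k) : ℝ≥0∞ :=
  Uker Q g k x Set.univ

/-- `Ū_k` as a real number. -/
def Ubar (Q : X → Measure X) (g : ℕ → X → ℝ≥0∞) (k : ℕ) (x : Path X k) : ℝ :=
  (UbarE Q g k x).toReal

/-- `U_k` applied to a real-valued function. -/
def Ufun (Q : X → Measure X) (g : ℕ → X → ℝ≥0∞) (k : ℕ)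
    (f : Path X (k + 1) → ℝ) (x : Path X k) : ℝ :=
  ∫ y, f y ∂(Uker Q g k x)

/-- The joint smoothing distributions `π_{k|k}`. -/
def smooth (ν : Measure X) (Q : X → Measure X) (g : ℕ → X → ℝ≥0∞) :
    (k : ℕ) → Measure (Path X k)
  | 0 => normalize ((ν.withDensity (g 0)).map (fun x (_ : Fin 1) => x))
  | k + 1 => normalize ((smooth ν Q g k).bind (Uker Q g k))

/-- The centring operator `Π_k[f] = f - π_{k|k} f`. -/
def ctr (ν : Measure X) (Q : X → Measure X) (g : ℕ → X → ℝ≥0∞) (k : ℕ)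
    (f : Path X k → ℝ) (x : Path X k) : ℝ :=
  f x - ∫ y, f y ∂(smooth ν Q g k)

/-- The path proposal kernel `R̄_k`. -/
def Rbar (R : ℕ → X → Measure X) (k : ℕ) (x : Path X k) : Measure (Path X (k + 1)) :=
  (R k (x (Fin.last k))).map (Fin.snoc x)

/-- `R̄_k` applied to a real-valued function. -/
def Rfun (R : ℕ → X → Measure X) (k : ℕ) (f : Path X (k + 1) → ℝ) (x : Path X k) : ℝ :=
  ∫ y, f y ∂(Rbar R k x)

/-- The second-stage importance weight function induced by a first-stage
weight function `t` at time `k` (this is `Φ_{k+1}` when `t = Ψ_k`);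
`dQR k x` is the density of `Q x` with respect to `R k x`. -/
def PhiT (g : ℕ → X → ℝ≥0∞) (dQR : ℕ → X → X → ℝ≥0∞) (k : ℕ)
    (t : Path X k → ℝ) (x : Path X (k + 1)) : ℝ :=
  (g (k + 1) (x (Fin.last (k + 1))) *
      dQR k (x ((Fin.last k).castSucc)) (x (Fin.last (k + 1)))).toReal / t (Fin.init x)

/-- The second-stage importance weight function `Φ_{k+1}` induced by the
first-stage weight functions `Ψ`. -/
def Phi (g : ℕ → X → ℝ≥0∞) (dQR : ℕ → X → X → ℝ≥0∞)
    (Ψ : (k : ℕ) → Path X k → ℝ) (k : ℕ) : Path X (k + 1) → ℝ :=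
  PhiT g dQR k (Ψ k)

/-- A proper set of functions. -/
def IsProper {E : Type*} (C : Set (E → ℝ)) : Prop :=
  (∀ f ∈ C, ∀ g ∈ C, f + g ∈ C) ∧
  (∀ c : ℝ, ∀ f ∈ C, c • f ∈ C) ∧
  (∀ c : ℝ, (fun _ => c) ∈ C) ∧
  (∀ g ∈ C, ∀ f : E → ℝ, (∀ x, |f x| ≤ |g x|) → (fun x => |f x|) ∈ C)

/-- Convergence to zero in probability of a triangular array of real
random variables. -/
def TendstoProbZero {α : ℕ → Type*} [∀ N, MeasurableSpace (α N)]
    (P : ∀ N, Measure (α N)) (f : ∀ N, α N → ℝ) : Prop :=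
  ∀ ε : ℝ, 0 < ε → Tendsto (fun N => P N {x | ε ≤ |f N x|}) atTop (𝓝 0)

/-- Convergence in distribution of a triangular array of real random
variables to a centred Gaussian with variance `v`. -/
def TendstoGaussian {α : ℕ → Type*} [∀ N, MeasurableSpace (α N)]
    (P : ∀ N, Measure (α N)) (f : ∀ N, α N → ℝ) (v : ℝ) : Prop :=
  ∀ φ : BoundedContinuousFunction ℝ ℝ,
    Tendsto (fun N => ∫ x, φ (f N x) ∂(P N)) atTop
      (𝓝 (∫ y, φ y ∂(gaussianReal 0 (Real.toNNReal v))))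

/-- The self-normalised estimate `Σ_i ω_i f(ξ_i) / Σ_j ω_j` of a weighted sample. -/
def estW {E : Type*} {n : ℕ} (w : E → ℝ) (f : E → ℝ) (ξ : Fin n → E) : ℝ :=
  (∑ i, w (ξ i) * f (ξ i)) / (∑ i, w (ξ i))

/-- A triangular array of weighted samples is consistent for `(C, μ)`. -/
def Consistent {E : Type*} [MeasurableSpace E] {α : ℕ → Type*}
    [∀ N, MeasurableSpace (α N)] {cnt : ℕ → ℕ}
    (P : ∀ N, Measure (α N)) (ξ : ∀ N, α N → Fin (cnt N) → E) (w : E → ℝ)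
    (C : Set (E → ℝ)) (μ : Measure E) : Prop :=
  (∀ f ∈ C, TendstoProbZero P (fun N x => estW w f (ξ N x) - ∫ e, f e ∂μ)) ∧
  (∀ ε : ℝ, 0 < ε →
    Tendsto (fun N => P N {x | ∃ i, ε ≤ w (ξ N x i) / ∑ j, w (ξ N x j)}) atTop (𝓝 0))

/-- A triangular array of weighted samples is asymptotically normal for
`(μ, A, W, σ, γ, {a_N})`; `vsq` is the squared version `σ²` of `σ`. -/
def AsympNormal {E : Type*} [MeasurableSpace E] {α : ℕ → Type*}
    [∀ N, MeasurableSpace (α N)] {cnt : ℕ → ℕ}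
    (P : ∀ N, Measure (α N)) (ξ : ∀ N, α N → Fin (cnt N) → E) (w : E → ℝ)
    (μ : Measure E) (A W : Set (E → ℝ)) (vsq : (E → ℝ) → ℝ) (γ : (E → ℝ) → ℝ)
    (a : ℕ → ℝ) : Prop :=
  (∀ f ∈ A, TendstoGaussian P (fun N x => a N * (estW w f (ξ N x) - ∫ e, f e ∂μ)) (vsq f)) ∧
  (∀ f ∈ W, TendstoProbZero P (fun N x =>
      (a N) ^ 2 * (∑ i, (w (ξ N x i)) ^ 2 * f (ξ N x i)) / (∑ i, w (ξ N x i)) ^ 2 - γ f)) ∧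
  (∀ ε : ℝ, 0 < ε →
    Tendsto (fun N => P N {x | ∃ i, ε ≤ a N * w (ξ N x i) / ∑ j, w (ξ N x j)}) atTop (𝓝 0))

/-- The (normalised) multinomial selection distribution on indices induced
by the weights `w`. -/
def idxMeasure {n : ℕ} (w : Fin n → ℝ≥0∞) : Measure (Fin n) :=
  normalize (Measure.sum fun j => w j • Measure.dirac j)

/-- One selection/mutation pass: draw `M` ancestor indices i.i.d. multinomially
with probabilities proportional to `w`, and extend each selected path by one
coordinate drawn from the proposal kernel. -/
def selectMutate (R : ℕ → X → Measure X) {N : ℕ} (M : ℕ) (k : ℕ)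
    (w : Fin N → ℝ≥0∞) (p : Fin N → Path X k) : Measure (Fin M → Path X (k + 1)) :=
  (Measure.pi fun _ : Fin M => idxMeasure w).bind fun I =>
    Measure.pi fun i => Rbar R k (p (I i))

/-- Multinomial resampling of `N` particles according to the normalised
weights `w (q i)`. -/
def resample {M : ℕ} (N : ℕ) {E : Type*} [MeasurableSpace E] (w : E → ℝ)
    (q : Fin M → E) : Measure (Fin N → E) :=
  Measure.map (fun (J : Fin N → Fin M) i => q (J i))
    (Measure.pi fun _ : Fin N => idxMeasure fun i => ENNReal.ofReal (w (q i)))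

/-- The law of the particle system produced by the single-stage auxiliary
particle filter (Algorithm 2), with pre-selection weight functions `wfun`. -/
def ssapfLaw (R : ℕ → X → Measure X) (Ψ : (k : ℕ) → Path X k → ℝ)
    (wfun : (k : ℕ) → Path X k → ℝ) {N : ℕ}
    (μ0 : Measure (Fin N → Path X 0)) : (k : ℕ) → Measure (Fin N → Path X k)
  | 0 => μ0
  | k + 1 => (ssapfLaw R Ψ wfun μ0 k).bind fun p =>
      selectMutate R N k (fun j => ENNReal.ofReal (wfun k (p j) * Ψ k (p j))) p

/-- The law of the particle system produced by the two-stage sampling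
particle filter (Algorithm 1), with pre-selection weight functions `wfun`
(after the second-stage resampling all weights are reset to `1`). -/
def tsspfLaw (g : ℕ → X → ℝ≥0∞) (dQR : ℕ → X → X → ℝ≥0∞)
    (R : ℕ → X → Measure X) (Ψ : (k : ℕ) → Path X k → ℝ)
    (wfun : (k : ℕ) → Path X k → ℝ) {N : ℕ} (M : ℕ)
    (μ0 : Measure (Fin N → Path X 0)) : (k : ℕ) → Measure (Fin N → Path X k)
  | 0 => μ0
  | k + 1 => (tsspfLaw g dQR R Ψ wfun M μ0 k).bind fun p =>
      (selectMutate R M k (fun j => ENNReal.ofReal (wfun k (p j) * Ψ k (p j))) p).bind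
        fun q => resample N (Phi g dQR Ψ k) q

/-- The sets `A_k` of Theorem 3.1 (TSSPF central limit theorem). -/
def AsetTSS (ν : Measure X) (Q : X → Measure X) (g : ℕ → X → ℝ≥0∞)
    (R : ℕ → X → Measure X) (dQR : ℕ → X → X → ℝ≥0∞)
    (Ψ : (k : ℕ) → Path X k → ℝ) (A0 : Set (Path X 0 → ℝ)) :
    (k : ℕ) → Set (Path X k → ℝ)
  | 0 => A0
  | k + 1 =>
    { f | MemLp f 2 (smooth ν Q g (k + 1)) ∧
        MemLp (fun x => Rfun R k (fun y => Phi g dQR Ψ k y * |f y|) x *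
          Ufun Q g k (fun y => |f y|) x) 1 (smooth ν Q g k) ∧
        (fun x => Ufun Q g k (fun y => |f y|) x) ∈ AsetTSS ν Q g R dQR Ψ A0 k ∧
        MemLp (fun x => Ufun Q g k (fun y => |f y|) x) 2 (smooth ν Q g k) ∧
        MemLp (fun y => Phi g dQR Ψ k y * (f y) ^ 2) 1 (smooth ν Q g (k + 1)) }

/-- The asymptotic variance functionals `σ²_k` of the TSSPF central limit
theorem. -/
def sigsqTSS (ν : Measure X) (Q : X → Measure X) (g : ℕ → X → ℝ≥0∞)
    (R : ℕ → X → Measure X) (dQR : ℕ → X → X → ℝ≥0∞)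
    (Ψ : (k : ℕ) → Path X k → ℝ) (σ0sq : (Path X 0 → ℝ) → ℝ) (β : ℝ) :
    (k : ℕ) → (Path X k → ℝ) → ℝ
  | 0 => σ0sq
  | k + 1 => fun f =>
      (∫ y, (ctr ν Q g (k + 1) f y) ^ 2 ∂(smooth ν Q g (k + 1))) +
      ((sigsqTSS ν Q g R dQR Ψ σ0sq β k
          (fun x => Ufun Q g k (ctr ν Q g (k + 1) f) x)) +
        β * ((∫ x, Ψ k x * Rfun R k
              (fun y => (Phi g dQR Ψ k y) ^ 2 * (ctr ν Q g (k + 1) f y) ^ 2) x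
              ∂(smooth ν Q g k)) *
            (∫ x, Ψ k x ∂(smooth ν Q g k)))) /
        (∫ x, Ubar Q g k x ∂(smooth ν Q g k)) ^ 2

/-- The sets `W̃_k` of Theorem 3.2 (SSAPF central limit theorem). -/
def WtSS (ν : Measure X) (Q : X → Measure X) (g : ℕ → X → ℝ≥0∞)
    (dQR : ℕ → X → X → ℝ≥0∞) (Ψ : (k : ℕ) → Path X k → ℝ)
    (W0 : Set (Path X 0 → ℝ)) : (k : ℕ) → Set (Path X k → ℝ)
  | 0 => W0
  | k + 1 =>
    { f | MemLp f 1 (smooth ν Q g (k + 1)) ∧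
        MemLp (fun y => Phi g dQR Ψ k y * f y) 1 (smooth ν Q g (k + 1)) }

/-- The sets `Ã_k` of Theorem 3.2 (SSAPF central limit theorem). -/
def AsetSS (ν : Measure X) (Q : X → Measure X) (g : ℕ → X → ℝ≥0∞)
    (R : ℕ → X → Measure X) (dQR : ℕ → X → X → ℝ≥0∞)
    (Ψ : (k : ℕ) → Path X k → ℝ) (A0 W0 : Set (Path X 0 → ℝ)) :
    (k : ℕ) → Set (Path X k → ℝ)
  | 0 => A0
  | k + 1 =>
    { f | MemLp f 1 (smooth ν Q g (k + 1)) ∧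
        MemLp (fun x => Rfun R k (fun y => Phi g dQR Ψ k y * |f y|) x *
          Ufun Q g k (fun y => |f y|) x) 1 (smooth ν Q g k) ∧
        (fun x => Ufun Q g k (fun y => |f y|) x) ∈ AsetSS ν Q g R dQR Ψ A0 W0 k ∧
        (fun x => (Ufun Q g k (fun y => |f y|) x) ^ 2) ∈ WtSS ν Q g dQR Ψ W0 k ∧
        MemLp (fun y => Phi g dQR Ψ k y * (f y) ^ 2) 1 (smooth ν Q g (k + 1)) }

/-- The asymptotic variance functionals `σ̃²_k` of the SSAPF central limit
theorem. -/
def sigsqSS (ν : Measure X) (Q : X → Measure X) (g : ℕ → X → ℝ≥0∞)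
    (R : ℕ → X → Measure X) (dQR : ℕ → X → X → ℝ≥0∞)
    (Ψ : (k : ℕ) → Path X k → ℝ) (σ0sq : (Path X 0 → ℝ) → ℝ) :
    (k : ℕ) → (Path X k → ℝ) → ℝ
  | 0 => σ0sq
  | k + 1 => fun f =>
      ((sigsqSS ν Q g R dQR Ψ σ0sq k
          (fun x => Ufun Q g k (ctr ν Q g (k + 1) f) x)) +
        (∫ x, Ψ k x * Rfun R k
            (fun y => (Phi g dQR Ψ k y) ^ 2 * (ctr ν Q g (k + 1) f y) ^ 2) x
            ∂(smooth ν Q g k)) *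
          (∫ x, Ψ k x ∂(smooth ν Q g k))) /
        (∫ x, Ubar Q g k x ∂(smooth ν Q g k)) ^ 2

/-- The functionals `γ̃_k` of the SSAPF central limit theorem. -/
def gamSS (ν : Measure X) (Q : X → Measure X) (g : ℕ → X → ℝ≥0∞)
    (dQR : ℕ → X → X → ℝ≥0∞) (Ψ : (k : ℕ) → Path X k → ℝ)
    (γ0 : (Path X 0 → ℝ) → ℝ) : (k : ℕ) → (Path X k → ℝ) → ℝ
  | 0 => γ0
  | k + 1 => fun f =>
      (∫ y, Phi g dQR Ψ k y * f y ∂(smooth ν Q g (k + 1))) *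
        (∫ x, Ψ k x ∂(smooth ν Q g k)) / (∫ x, Ubar Q g k x ∂(smooth ν Q g k))

/-- The weight functions carried by the SSAPF samples: weight `1` at time `0`
(as in assumption A2) and `Φ_k` at time `k ≥ 1`. -/
def ssWeight (g : ℕ → X → ℝ≥0∞) (dQR : ℕ → X → X → ℝ≥0∞)
    (Ψ : (k : ℕ) → Path X k → ℝ) : (k : ℕ) → Path X k → ℝ
  | 0 => fun _ => 1
  | k + 1 => Phi g dQR Ψ k

end APF

namespace APF

open MeasureTheory
open scoped ENNReal

section AsetProofAux

open ProbabilityTheory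

variable {X : Type*} [MeasurableSpace X]

lemma measurable_snoc2 {k : ℕ} :
    Measurable (fun p : Path X k × X => (Fin.snoc p.1 p.2 : Path X (k + 1))) := by
  refine measurable_pi_iff.mpr fun i => ?_
  induction i using Fin.lastCases with
  | last => simpa [Fin.snoc_last] using measurable_snd
  | cast j => simpa [Fin.snoc_castSucc, Function.comp_def] using (measurable_pi_apply j).comp measurable_fst

lemma measurable_snocx {k : ℕ} (x : Path X k) :
    Measurable (fun z : X => (Fin.snoc x z : Path X (k + 1))) :=
  measurable_snoc2.comp (measurable_const.prodMk measurable_id)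

lemma measurable_finInit {k : ℕ} :
    Measurable (Fin.init : Path X (k + 1) → Path X k) :=
  measurable_pi_lambda _ fun _ => measurable_pi_apply _

lemma measurable_phi {g : ℕ → X → ℝ≥0∞} {dQR : ℕ → X → X → ℝ≥0∞} {Ψ : (k : ℕ) → Path X k → ℝ}
    (hg : ∀ j, Measurable (g j)) (hdm : ∀ j, Measurable (Function.uncurry (dQR j)))
    (hΨm : ∀ j, Measurable (Ψ j)) (j : ℕ) : Measurable (Phi g dQR Ψ j) := by
  unfold Phi PhiT
  exact ((((hg (j + 1)).comp (measurable_pi_apply _)).mul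
    ((hdm j).comp ((measurable_pi_apply _).prodMk (measurable_pi_apply _)))).ennreal_toReal).div
    ((hΨm j).comp measurable_finInit)

lemma phi_nonneg {g : ℕ → X → ℝ≥0∞} {dQR : ℕ → X → X → ℝ≥0∞} {Ψ : (k : ℕ) → Path X k → ℝ}
    (hΨpos : ∀ j x, 0 < Ψ j x) (j : ℕ) (y : Path X (j + 1)) : 0 ≤ Phi g dQR Ψ j y :=
  div_nonneg ENNReal.toReal_nonneg (hΨpos j _).le

lemma sq_lintegral_le {E : Type*} [MeasurableSpace E] (m : Measure E) (a : E → ℝ≥0∞)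
    (ha : AEMeasurable a m) :
    (∫⁻ x, a x ∂m) ^ 2 ≤ m Set.univ * ∫⁻ x, a x ^ 2 ∂m := by
  have hpq : Real.HolderConjugate 2 2 := Real.HolderConjugate.two_two
  have h := ENNReal.lintegral_mul_le_Lp_mul_Lq m hpq ha (aemeasurable_const (b := (1 : ℝ≥0∞)))
  simp only [Pi.mul_apply, mul_one, ENNReal.one_rpow, lintegral_one] at h
  have h2 : (∫⁻ x, a x ∂m) ^ 2 ≤
      ((∫⁻ x, a x ^ (2 : ℝ) ∂m) ^ ((1 : ℝ) / 2) * (m Set.univ) ^ ((1 : ℝ) / 2)) ^ 2 := by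
    rw [pow_two, pow_two]; exact mul_le_mul' h h
  refine h2.trans (le_of_eq ?_)
  have e1 : ∀ x, a x ^ (2 : ℝ) = a x ^ 2 := fun x => by
    rw [show (2 : ℝ) = ((2 : ℕ) : ℝ) by norm_num, ENNReal.rpow_natCast]
  calc ((∫⁻ x, a x ^ (2 : ℝ) ∂m) ^ ((1 : ℝ) / 2) * (m Set.univ) ^ ((1 : ℝ) / 2)) ^ 2
      = ((∫⁻ x, a x ^ (2 : ℝ) ∂m) ^ ((1 : ℝ) / 2)) ^ 2
        * ((m Set.univ) ^ ((1 : ℝ) / 2)) ^ 2 := mul_pow _ _ 2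
    _ = (∫⁻ x, a x ^ (2 : ℝ) ∂m) * m Set.univ := by
        rw [← ENNReal.rpow_natCast ((∫⁻ x, a x ^ (2 : ℝ) ∂m) ^ ((1 : ℝ) / 2)) 2,
          ← ENNReal.rpow_natCast ((m Set.univ) ^ ((1 : ℝ) / 2)) 2,
          ← ENNReal.rpow_mul, ← ENNReal.rpow_mul]
        norm_num
    _ = m Set.univ * ∫⁻ x, a x ^ 2 ∂m := by rw [mul_comm, lintegral_congr e1]

lemma exists_uker_kernel (Q : X → Measure X) (hQm : Measurable Q)
    (hQp : ∀ x, IsProbabilityMeasure (Q x)) (g : ℕ → X → ℝ≥0∞) (hg : ∀ j, Measurable (g j))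
    (k : ℕ) (c : ℝ) (hgb : ∀ z, g (k + 1) z ≤ ENNReal.ofReal c) :
    ∃ κ : Kernel (Path X k) (Path X (k + 1)), IsSFiniteKernel κ ∧ ∀ x, κ x = Uker Q g k x := by
  have hbase : Measurable fun x : Path X k => Q (x (Fin.last k)) :=
    hQm.comp (measurable_pi_apply _)
  let base : Kernel (Path X k) X := ⟨fun x => Q (x (Fin.last k)), hbase⟩
  haveI : IsMarkovKernel base := ⟨fun _ => hQp _⟩
  have hdens : Measurable (Function.uncurry fun (_ : Path X k) z => g (k + 1) z) :=
    (hg (k + 1)).comp measurable_snd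
  haveI hfin : IsFiniteKernel (Kernel.withDensity base fun _ z => g (k + 1) z) :=
    Kernel.isFiniteKernel_withDensity_of_bounded base ENNReal.ofReal_ne_top fun _ b => hgb b
  refine ⟨Kernel.map
      (Kernel.prod (Kernel.deterministic id measurable_id)
        (Kernel.withDensity base fun _ z => g (k + 1) z))
      (fun p => Fin.snoc p.1 p.2), inferInstance, fun x => ?_⟩
  rw [Kernel.map_apply _ measurable_snoc2, Kernel.prod_apply, Kernel.deterministic_apply,
    Kernel.withDensity_apply _ hdens, id, Measure.dirac_prod,
    Measure.map_map measurable_snoc2 measurable_prodMk_left]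
  rfl

lemma exists_rbar_kernel (R : ℕ → X → Measure X) (hRm : ∀ j, Measurable (R j))
    (hRp : ∀ j x, IsProbabilityMeasure (R j x)) (k : ℕ) :
    ∃ κ : Kernel (Path X k) (Path X (k + 1)), IsSFiniteKernel κ ∧ ∀ x, κ x = Rbar R k x := by
  have hbase : Measurable fun x : Path X k => R k (x (Fin.last k)) :=
    (hRm k).comp (measurable_pi_apply _)
  let base : Kernel (Path X k) X := ⟨fun x => R k (x (Fin.last k)), hbase⟩
  haveI : IsMarkovKernel base := ⟨fun _ => hRp _ _⟩
  refine ⟨Kernel.map (Kernel.prod (Kernel.deterministic id measurable_id) base)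
      (fun p => Fin.snoc p.1 p.2), inferInstance, fun x => ?_⟩
  rw [Kernel.map_apply _ measurable_snoc2, Kernel.prod_apply, Kernel.deterministic_apply,
    id, Measure.dirac_prod, Measure.map_map measurable_snoc2 measurable_prodMk_left]
  rfl

lemma measurable_uker (Q : X → Measure X) (hQm : Measurable Q)
    (hQp : ∀ x, IsProbabilityMeasure (Q x)) (g : ℕ → X → ℝ≥0∞) (hg : ∀ j, Measurable (g j))
    (k : ℕ) (c : ℝ) (hgb : ∀ z, g (k + 1) z ≤ ENNReal.ofReal c) :
    Measurable (Uker Q g k) := by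
  obtain ⟨κ, _, hκ⟩ := exists_uker_kernel Q hQm hQp g hg k c hgb
  have h := κ.measurable
  rwa [show (κ : Path X k → Measure (Path X (k + 1))) = Uker Q g k from funext hκ] at h

lemma lintegral_uker {Q : X → Measure X} {g : ℕ → X → ℝ≥0∞} (R : ℕ → X → Measure X)
    (dQR : ℕ → X → X → ℝ≥0∞) {k : ℕ} (x : Path X k)
    (hgm : Measurable (g (k + 1)))
    (hdx : Measurable (dQR k (x (Fin.last k))))
    (hab : Q (x (Fin.last k)) = (R k (x (Fin.last k))).withDensity (dQR k (x (Fin.last k))))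
    {F : Path X (k + 1) → ℝ≥0∞} (hF : Measurable F) :
    ∫⁻ y, F y ∂Uker Q g k x =
      ∫⁻ z, dQR k (x (Fin.last k)) z * (g (k + 1) z * F (Fin.snoc x z))
        ∂(R k (x (Fin.last k))) := by
  have hFs : Measurable fun z : X => F (Fin.snoc x z) := hF.comp (measurable_snocx x)
  rw [Uker, lintegral_map hF (measurable_snocx x),
    lintegral_withDensity_eq_lintegral_mul _ hgm hFs, hab]
  rw [lintegral_withDensity_eq_lintegral_mul _ hdx
      (hgm.mul hFs)]
  simp only [Pi.mul_apply]

lemma uker_univ_le (Q : X → Measure X) (hQp : ∀ x, IsProbabilityMeasure (Q x))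
    (g : ℕ → X → ℝ≥0∞) (k : ℕ) (x : Path X k)
    (c : ℝ) (hgb : ∀ z, g (k + 1) z ≤ ENNReal.ofReal c) :
    Uker Q g k x Set.univ ≤ ENNReal.ofReal c := by
  haveI := hQp (x (Fin.last k))
  rw [Uker, Measure.map_apply (measurable_snocx x) MeasurableSet.univ, Set.preimage_univ,
    withDensity_apply _ MeasurableSet.univ, setLIntegral_univ]
  calc ∫⁻ z, g (k + 1) z ∂Q (x (Fin.last k))
      ≤ ∫⁻ _, ENNReal.ofReal c ∂Q (x (Fin.last k)) := lintegral_mono hgb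
    _ = ENNReal.ofReal c := by simp

lemma normalize_isProb {E : Type*} [MeasurableSpace E] {μ : Measure E}
    (h0 : μ Set.univ ≠ 0) (ht : μ Set.univ ≠ ∞) : IsProbabilityMeasure (normalize μ) :=
  ⟨by rw [normalize, Measure.smul_apply, smul_eq_mul, ENNReal.inv_mul_cancel h0 ht]⟩

lemma smooth_prob (ν : Measure X) (Q : X → Measure X) (hQm : Measurable Q)
    (hQp : ∀ x, IsProbabilityMeasure (Q x)) (g : ℕ → X → ℝ≥0∞) (hg : ∀ j, Measurable (g j))
    (hgbdd : ∀ j, ∃ c, ∀ z, g j z ≤ ENNReal.ofReal c)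
    (hg0 : 0 < ∫⁻ z, g 0 z ∂ν ∧ ∫⁻ z, g 0 z ∂ν < ∞)
    (hU : ∀ j, 0 < ∫⁻ x, UbarE Q g j x ∂smooth ν Q g j ∧
      ∫⁻ x, UbarE Q g j x ∂smooth ν Q g j < ∞) :
    ∀ k, IsProbabilityMeasure (smooth ν Q g k) := by
  intro k
  cases k with
  | zero =>
    have hemb : Measurable fun (x : X) (_ : Fin 1) => x :=
      measurable_pi_lambda _ fun _ => measurable_id
    have hmass : ((ν.withDensity (g 0)).map fun x (_ : Fin 1) => x) Set.univ
        = ∫⁻ z, g 0 z ∂ν := by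
      rw [Measure.map_apply hemb MeasurableSet.univ, Set.preimage_univ,
        withDensity_apply _ MeasurableSet.univ, setLIntegral_univ]
    exact normalize_isProb (by rw [hmass]; exact hg0.1.ne') (by rw [hmass]; exact hg0.2.ne)
  | succ j =>
    obtain ⟨c, hgb⟩ := hgbdd (j + 1)
    have hmU : Measurable (Uker Q g j) := measurable_uker Q hQm hQp g hg j c hgb
    have hmass : ((smooth ν Q g j).bind (Uker Q g j)) Set.univ
        = ∫⁻ x, UbarE Q g j x ∂smooth ν Q g j :=
      Measure.bind_apply MeasurableSet.univ hmU.aemeasurable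
    exact normalize_isProb (by rw [hmass]; exact (hU j).1.ne') (by rw [hmass]; exact (hU j).2.ne)

lemma lintegral_smooth_succ (ν : Measure X) (Q : X → Measure X) (g : ℕ → X → ℝ≥0∞) {k : ℕ}
    (hmU : Measurable (Uker Q g k)) {F : Path X (k + 1) → ℝ≥0∞} (hF : Measurable F) :
    ∫⁻ y, F y ∂smooth ν Q g (k + 1) =
      (∫⁻ x, UbarE Q g k x ∂smooth ν Q g k)⁻¹ *
        ∫⁻ x, ∫⁻ y, F y ∂Uker Q g k x ∂smooth ν Q g k := by
  rw [show smooth ν Q g (k + 1) = normalize ((smooth ν Q g k).bind (Uker Q g k)) from rfl,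
    normalize, lintegral_smul_measure, Measure.lintegral_bind hmU.aemeasurable hF.aemeasurable,
    Measure.bind_apply MeasurableSet.univ hmU.aemeasurable]
  rfl

lemma ae_uker_zero (ν : Measure X) (Q : X → Measure X) (g : ℕ → X → ℝ≥0∞) {k : ℕ}
    (hmU : Measurable (Uker Q g k))
    (hZt : ∫⁻ x, UbarE Q g k x ∂smooth ν Q g k ≠ ∞)
    {N : Set (Path X (k + 1))} (hNm : MeasurableSet N)
    (hN0 : smooth ν Q g (k + 1) N = 0) :
    ∀ᵐ x ∂smooth ν Q g k, Uker Q g k x N = 0 := by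
  have h1 : ∫⁻ y, N.indicator 1 y ∂smooth ν Q g (k + 1) = 0 := by
    rw [lintegral_indicator_one hNm, hN0]
  rw [lintegral_smooth_succ ν Q g hmU (measurable_one.indicator hNm)] at h1
  simp only [lintegral_indicator_one hNm] at h1
  have h2 : ∫⁻ x, Uker Q g k x N ∂smooth ν Q g k = 0 := by
    rcases mul_eq_zero.mp h1 with h | h
    · exact absurd h (ENNReal.inv_ne_zero.mpr hZt)
    · exact h
  have h3 := (lintegral_eq_zero_iff ((Measure.measurable_coe hNm).comp hmU)).mp h2
  filter_upwards [h3] with x hx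
  exact hx

lemma phi_zero_on_null {Q : X → Measure X} (g : ℕ → X → ℝ≥0∞) (R : ℕ → X → Measure X)
    (dQR : ℕ → X → X → ℝ≥0∞) (Ψ : (j : ℕ) → Path X j → ℝ)
    (hg : ∀ j, Measurable (g j)) (hdm : ∀ j, Measurable (Function.uncurry (dQR j)))
    (hΨm : ∀ j, Measurable (Ψ j))
    (habs : ∀ j x, Q x = (R j x).withDensity (dQR j x))
    (k : ℕ) (x : Path X k) {N : Set (Path X (k + 1))} (hNm : MeasurableSet N)
    (hUN : Uker Q g k x N = 0) :
    ∀ᵐ y ∂(Rbar R k x), y ∈ N → Phi g dQR Ψ k y = 0 := by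
  have hφ := measurable_phi hg hdm hΨm k
  have hS : MeasurableSet {y : Path X (k + 1) | y ∈ N → Phi g dQR Ψ k y = 0} := by
    have hset : {y : Path X (k + 1) | y ∈ N → Phi g dQR Ψ k y = 0}
        = Nᶜ ∪ Phi g dQR Ψ k ⁻¹' {0} := by
      ext y; simp [imp_iff_not_or]
    rw [hset]
    exact hNm.compl.union (hφ (measurableSet_singleton 0))
  rw [Rbar, ae_map_iff (measurable_snocx x).aemeasurable hS]
  have h1 : ∫⁻ z, dQR k (x (Fin.last k)) z *
      (g (k + 1) z * N.indicator 1 (Fin.snoc x z)) ∂(R k (x (Fin.last k))) = 0 := by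
    rw [← lintegral_uker R dQR x (hg (k + 1)) ((hdm k).comp measurable_prodMk_left)
      (habs k (x (Fin.last k))) (measurable_one.indicator hNm),
      lintegral_indicator_one hNm, hUN]
  have h2 := (lintegral_eq_zero_iff (((hdm k).comp measurable_prodMk_left).mul
    ((hg (k + 1)).mul ((measurable_one.indicator hNm).comp (measurable_snocx x))))).mp h1
  filter_upwards [h2] with z hz hmem
  simp only [Pi.mul_apply, Function.comp_apply, Function.uncurry_apply_pair, Pi.zero_apply,
    Set.indicator_of_mem hmem, Pi.one_apply, mul_one] at hz
  unfold Phi PhiT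
  simp only [Fin.snoc_last, Fin.snoc_castSucc, Fin.init_snoc]
  rw [show g (k + 1) z * dQR k (x (Fin.last k)) z = 0 from by
    rcases mul_eq_zero.mp hz with h | h
    · rw [h, mul_zero]
    · rw [h, zero_mul]]
  simp

end AsetProofAux

section AsetProofMain

open ProbabilityTheory

variable {X : Type*} [MeasurableSpace X]

lemma key_meas
    (ν : Measure X) (Q : X → Measure X) (hQm : Measurable Q)
    (hQp : ∀ x, IsProbabilityMeasure (Q x))
    (g : ℕ → X → ℝ≥0∞) (hg : ∀ j, Measurable (g j))
    (R : ℕ → X → Measure X) (hRm : ∀ j, Measurable (R j))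
    (hRp : ∀ j x, IsProbabilityMeasure (R j x))
    (dQR : ℕ → X → X → ℝ≥0∞) (hdm : ∀ j, Measurable (Function.uncurry (dQR j)))
    (habs : ∀ j x, Q x = (R j x).withDensity (dQR j x))
    (Ψ : (j : ℕ) → Path X j → ℝ) (hΨm : ∀ j, Measurable (Ψ j)) (hΨpos : ∀ j x, 0 < Ψ j x)
    (k : ℕ)
    (hZ0 : ∫⁻ x, UbarE Q g k x ∂smooth ν Q g k ≠ 0)
    (hZt : ∫⁻ x, UbarE Q g k x ∂smooth ν Q g k ≠ ∞)
    (cg : ℝ) (hgb : ∀ z, g (k + 1) z ≤ ENNReal.ofReal cg)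
    (C : ℝ) (hC : 0 ≤ C) (hΦb : ∀ y, |Phi g dQR Ψ k y| ≤ C)
    (f : Path X (k + 1) → ℝ) (hfm : Measurable f)
    (hfi : ∫⁻ y, (‖f y‖₊ : ℝ≥0∞) ^ 2 ∂smooth ν Q g (k + 1) ≠ ∞) :
    MemLp (fun x => Ufun Q g k (fun y => |f y|) x) 2 (smooth ν Q g k) ∧
      MemLp (fun x => Rfun R k (fun y => Phi g dQR Ψ k y * |f y|) x *
        Ufun Q g k (fun y => |f y|) x) 1 (smooth ν Q g k) := by
  obtain ⟨κU, hκUs, hκU⟩ := exists_uker_kernel Q hQm hQp g hg k cg hgb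
  obtain ⟨κR, hκRs, hκR⟩ := exists_rbar_kernel R hRm hRp k
  haveI := hκUs
  haveI := hκRs
  have hmU : Measurable (Uker Q g k) := measurable_uker Q hQm hQp g hg k cg hgb
  have hφ : Measurable (Phi g dQR Ψ k) := measurable_phi hg hdm hΨm k
  have hφ0 : ∀ y, 0 ≤ Phi g dQR Ψ k y := phi_nonneg hΨpos k
  have sqmono : ∀ {u v : ℝ≥0∞}, u ≤ v → u ^ 2 ≤ v ^ 2 := fun h => by
    rw [pow_two, pow_two]; exact mul_le_mul' h h
  set μ := smooth ν Q g k with hμdef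
  set a : Path X (k + 1) → ℝ≥0∞ := fun y => (‖f y‖₊ : ℝ≥0∞) with ha
  have ham : Measurable a := hfm.enorm
  set I : Path X k → ℝ≥0∞ := fun x => ∫⁻ y, a y ^ 2 ∂Uker Q g k x with hI
  have hIm : Measurable I := by
    have h := Measurable.lintegral_kernel (κ := κU) (ham.pow_const 2)
    simp only [hκU] at h
    exact h
  have hI_fin : ∫⁻ x, I x ∂μ ≠ ∞ := by
    have h1 := lintegral_smooth_succ ν Q g hmU (ham.pow_const 2)
    have h2 : ∫⁻ x, I x ∂μ =
        (∫⁻ x, UbarE Q g k x ∂μ) * ∫⁻ y, a y ^ 2 ∂smooth ν Q g (k + 1) := by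
      rw [h1, ← mul_assoc, ENNReal.mul_inv_cancel hZ0 hZt, one_mul]
    rw [h2]
    exact ENNReal.mul_ne_top hZt hfi
  have hUsm : StronglyMeasurable fun x => Ufun Q g k (fun y => |f y|) x := by
    have hsm : StronglyMeasurable fun p : Path X k × Path X (k + 1) => |f p.2| :=
      ((hfm.comp measurable_snd).abs).stronglyMeasurable
    have h := hsm.integral_kernel_prod_right' (κ := κU)
    simp only [hκU] at h
    exact h
  have hRsm : StronglyMeasurable fun x => Rfun R k (fun y => Phi g dQR Ψ k y * |f y|) x := by
    have hsm : StronglyMeasurable fun p : Path X k × Path X (k + 1) =>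
        Phi g dQR Ψ k p.2 * |f p.2| :=
      ((hφ.comp measurable_snd).mul (hfm.comp measurable_snd).abs).stronglyMeasurable
    have h := hsm.integral_kernel_prod_right' (κ := κR)
    simp only [hκR] at h
    exact h
  have hUf_le : ∀ x, (‖Ufun Q g k (fun y => |f y|) x‖₊ : ℝ≥0∞) ≤ ∫⁻ y, a y ∂Uker Q g k x := by
    intro x
    refine (enorm_integral_le_lintegral_enorm _).trans (le_of_eq ?_)
    exact lintegral_congr fun y => by rw [ha]; simp [Real.nnnorm_abs, enorm_eq_nnnorm]
  have hUf2 : ∀ x, (‖Ufun Q g k (fun y => |f y|) x‖₊ : ℝ≥0∞) ^ 2 ≤ ENNReal.ofReal cg * I x := by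
    intro x
    refine (sqmono (hUf_le x)).trans ?_
    refine (sq_lintegral_le _ a ham.aemeasurable).trans ?_
    exact mul_le_mul' (uker_univ_le Q hQp g k x cg hgb) le_rfl
  have mem1 : MemLp (fun x => Ufun Q g k (fun y => |f y|) x) 2 μ := by
    rw [memLp_two_iff_integrable_sq hUsm.aestronglyMeasurable]
    refine ⟨by simpa [pow_two, Pi.mul_def] using (hUsm.mul hUsm).aestronglyMeasurable, ?_⟩
    have hfin : (∫⁻ x, (‖(Ufun Q g k (fun y => |f y|) x) ^ 2‖₊ : ℝ≥0∞) ∂μ) < ∞ := by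
      have hpt : ∀ x, (‖(Ufun Q g k (fun y => |f y|) x) ^ 2‖₊ : ℝ≥0∞)
          ≤ ENNReal.ofReal cg * I x := by
        intro x
        calc (‖(Ufun Q g k (fun y => |f y|) x) ^ 2‖₊ : ℝ≥0∞)
            = (‖Ufun Q g k (fun y => |f y|) x‖₊ : ℝ≥0∞) ^ 2 := by
              rw [← ENNReal.coe_pow, nnnorm_pow]
          _ ≤ _ := hUf2 x
      calc ∫⁻ x, (‖(Ufun Q g k (fun y => |f y|) x) ^ 2‖₊ : ℝ≥0∞) ∂μ
          ≤ ∫⁻ x, ENNReal.ofReal cg * I x ∂μ := lintegral_mono hpt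
        _ = ENNReal.ofReal cg * ∫⁻ x, I x ∂μ := lintegral_const_mul _ hIm
        _ < ∞ := ENNReal.mul_lt_top ENNReal.ofReal_lt_top hI_fin.lt_top
    exact hfin
  have hprod_pt : ∀ x, (‖Rfun R k (fun y => Phi g dQR Ψ k y * |f y|) x *
      Ufun Q g k (fun y => |f y|) x‖₊ : ℝ≥0∞) ≤ ENNReal.ofReal C * I x := by
    intro x
    haveI := hRp k (x (Fin.last k))
    haveI := hQp (x (Fin.last k))
    have hs0 : ENNReal.ofReal (Ψ k x) ≠ 0 := (ENNReal.ofReal_pos.mpr (hΨpos k x)).ne'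
    have hst : ENNReal.ofReal (Ψ k x) ≠ ∞ := ENNReal.ofReal_ne_top
    have hdmx : Measurable (dQR k (x (Fin.last k))) := (hdm k).comp measurable_prodMk_left
    set w : X → ℝ≥0∞ := fun z => g (k + 1) z * dQR k (x (Fin.last k)) z with hw
    have hwm : Measurable w := (hg (k + 1)).mul hdmx
    have hd_int : ∫⁻ z, dQR k (x (Fin.last k)) z ∂(R k (x (Fin.last k))) = 1 := by
      calc ∫⁻ z, dQR k (x (Fin.last k)) z ∂(R k (x (Fin.last k)))
          = ((R k (x (Fin.last k))).withDensity (dQR k (x (Fin.last k)))) Set.univ := by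
            rw [withDensity_apply _ MeasurableSet.univ, setLIntegral_univ]
        _ = Q (x (Fin.last k)) Set.univ := by rw [← habs k (x (Fin.last k))]
        _ = 1 := measure_univ
    have hd_fin : ∀ᵐ z ∂(R k (x (Fin.last k))), dQR k (x (Fin.last k)) z < ∞ :=
      ae_lt_top hdmx (by rw [hd_int]; exact ENNReal.one_ne_top)
    have hΦ_snoc : ∀ z, Phi g dQR Ψ k (Fin.snoc x z)
        = (g (k + 1) z * dQR k (x (Fin.last k)) z).toReal / Ψ k x := by
      intro z
      unfold Phi PhiT
      simp only [Fin.snoc_last, Fin.snoc_castSucc, Fin.init_snoc]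
    have hw_le : ∀ᵐ z ∂(R k (x (Fin.last k))),
        w z ≤ ENNReal.ofReal C * ENNReal.ofReal (Ψ k x) := by
      filter_upwards [hd_fin] with z hz
      have h2 := hΦb (Fin.snoc x z)
      rw [hΦ_snoc z] at h2
      have h4 : (g (k + 1) z * dQR k (x (Fin.last k)) z).toReal ≤ C * Ψ k x := by
        have h3 := (abs_le.mp h2).2
        rwa [div_le_iff₀ (hΨpos k x)] at h3
      have h5 : g (k + 1) z * dQR k (x (Fin.last k)) z ≠ ∞ :=
        ENNReal.mul_ne_top ((hgb z).trans_lt ENNReal.ofReal_lt_top).ne hz.ne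
      calc w z = ENNReal.ofReal ((g (k + 1) z * dQR k (x (Fin.last k)) z).toReal) := by
            rw [ENNReal.ofReal_toReal h5]
        _ ≤ ENNReal.ofReal (C * Ψ k x) := ENNReal.ofReal_le_ofReal h4
        _ = ENNReal.ofReal C * ENNReal.ofReal (Ψ k x) := ENNReal.ofReal_mul hC
    have hw_int : ∫⁻ z, w z ∂(R k (x (Fin.last k)))
        ≤ ENNReal.ofReal C * ENNReal.ofReal (Ψ k x) := by
      refine (lintegral_mono_ae hw_le).trans ?_
      simp [lintegral_const, measure_univ]
    have hU_eq : ∫⁻ y, a y ∂Uker Q g k x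
        = ∫⁻ z, w z * a (Fin.snoc x z) ∂(R k (x (Fin.last k))) := by
      rw [lintegral_uker R dQR x (hg (k + 1)) hdmx (habs k (x (Fin.last k))) ham]
      exact lintegral_congr fun z => by rw [hw]; ring
    have hI_eq : ∫⁻ z, w z * a (Fin.snoc x z) ^ 2 ∂(R k (x (Fin.last k))) = I x := by
      simp only [hI]
      rw [lintegral_uker R dQR x (hg (k + 1)) hdmx (habs k (x (Fin.last k)))
        (ham.pow_const 2)]
      exact lintegral_congr fun z => by rw [hw]; ring
    have hCS : (∫⁻ z, w z * a (Fin.snoc x z) ∂(R k (x (Fin.last k)))) ^ 2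
        ≤ (∫⁻ z, w z ∂(R k (x (Fin.last k)))) * I x := by
      have hax : Measurable fun z : X => a (Fin.snoc x z) := ham.comp (measurable_snocx x)
      have h1 : ∫⁻ z, w z * a (Fin.snoc x z) ∂(R k (x (Fin.last k)))
          = ∫⁻ z, a (Fin.snoc x z) ∂((R k (x (Fin.last k))).withDensity w) := by
        rw [lintegral_withDensity_eq_lintegral_mul _ hwm hax]
        rfl
      have h2 := sq_lintegral_le ((R k (x (Fin.last k))).withDensity w)
        (fun z => a (Fin.snoc x z)) hax.aemeasurable
      rw [h1]
      refine h2.trans (le_of_eq ?_)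
      congr 1
      · rw [withDensity_apply _ MeasurableSet.univ, setLIntegral_univ]
      · rw [lintegral_withDensity_eq_lintegral_mul _ hwm
          ((hax.pow_const 2 : Measurable fun z : X => a (Fin.snoc x z) ^ 2))]
        simp only [Pi.mul_apply]
        exact hI_eq
    have hR_le : (‖Rfun R k (fun y => Phi g dQR Ψ k y * |f y|) x‖₊ : ℝ≥0∞)
        ≤ (∫⁻ z, w z * a (Fin.snoc x z) ∂(R k (x (Fin.last k)))) * (ENNReal.ofReal (Ψ k x))⁻¹ := by
      refine (enorm_integral_le_lintegral_enorm _).trans ?_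
      rw [show Rbar R k x = (R k (x (Fin.last k))).map (Fin.snoc x) from rfl,
        lintegral_map (f := fun y => ‖Phi g dQR Ψ k y * |f y|‖ₑ) (g := Fin.snoc x)
          (hφ.mul hfm.abs).enorm (measurable_snocx x)]
      have hpt : ∀ z, (‖Phi g dQR Ψ k (Fin.snoc x z) * |f (Fin.snoc x z)|‖₊ : ℝ≥0∞)
          ≤ (w z * a (Fin.snoc x z)) * (ENNReal.ofReal (Ψ k x))⁻¹ := by
        intro z
        have h0 : 0 ≤ Phi g dQR Ψ k (Fin.snoc x z) := hφ0 _
        calc (‖Phi g dQR Ψ k (Fin.snoc x z) * |f (Fin.snoc x z)|‖₊ : ℝ≥0∞)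
            = ENNReal.ofReal (Phi g dQR Ψ k (Fin.snoc x z)) *
              ENNReal.ofReal |f (Fin.snoc x z)| := by
              rw [← enorm_eq_nnnorm, Real.enorm_eq_ofReal (mul_nonneg h0 (abs_nonneg _)),
                ENNReal.ofReal_mul h0]
          _ = ENNReal.ofReal (Phi g dQR Ψ k (Fin.snoc x z)) * a (Fin.snoc x z) := by
              simp only [ha]
              rw [← enorm_eq_nnnorm, Real.enorm_eq_ofReal_abs]
          _ ≤ (w z * (ENNReal.ofReal (Ψ k x))⁻¹) * a (Fin.snoc x z) := by
              refine mul_le_mul' ?_ le_rfl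
              rw [hΦ_snoc z, ENNReal.ofReal_div_of_pos (hΨpos k x), div_eq_mul_inv]
              exact mul_le_mul' ENNReal.ofReal_toReal_le le_rfl
          _ = (w z * a (Fin.snoc x z)) * (ENNReal.ofReal (Ψ k x))⁻¹ := by ring
      refine (lintegral_mono hpt).trans (le_of_eq ?_)
      exact lintegral_mul_const' _ _ (by simpa using hs0)
    calc (‖Rfun R k (fun y => Phi g dQR Ψ k y * |f y|) x *
        Ufun Q g k (fun y => |f y|) x‖₊ : ℝ≥0∞)
        = (‖Rfun R k (fun y => Phi g dQR Ψ k y * |f y|) x‖₊ : ℝ≥0∞) *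
          (‖Ufun Q g k (fun y => |f y|) x‖₊ : ℝ≥0∞) := by rw [nnnorm_mul, ENNReal.coe_mul]
      _ ≤ ((∫⁻ z, w z * a (Fin.snoc x z) ∂(R k (x (Fin.last k)))) *
            (ENNReal.ofReal (Ψ k x))⁻¹) *
          (∫⁻ z, w z * a (Fin.snoc x z) ∂(R k (x (Fin.last k)))) :=
          mul_le_mul' hR_le ((hUf_le x).trans (le_of_eq hU_eq))
      _ = (∫⁻ z, w z * a (Fin.snoc x z) ∂(R k (x (Fin.last k)))) ^ 2 *
          (ENNReal.ofReal (Ψ k x))⁻¹ := by ring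
      _ ≤ ((ENNReal.ofReal C * ENNReal.ofReal (Ψ k x)) * I x) *
          (ENNReal.ofReal (Ψ k x))⁻¹ :=
          mul_le_mul' (hCS.trans (mul_le_mul' hw_int le_rfl)) le_rfl
      _ = (ENNReal.ofReal C * I x) * (ENNReal.ofReal (Ψ k x) * (ENNReal.ofReal (Ψ k x))⁻¹) := by
          ring
      _ = ENNReal.ofReal C * I x := by rw [ENNReal.mul_inv_cancel hs0 hst, mul_one]
  have mem2 : MemLp (fun x => Rfun R k (fun y => Phi g dQR Ψ k y * |f y|) x *
      Ufun Q g k (fun y => |f y|) x) 1 μ := by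
    rw [memLp_one_iff_integrable]
    refine ⟨(hRsm.mul hUsm).aestronglyMeasurable, ?_⟩
    have hfin : (∫⁻ x, (‖Rfun R k (fun y => Phi g dQR Ψ k y * |f y|) x *
        Ufun Q g k (fun y => |f y|) x‖₊ : ℝ≥0∞) ∂μ) < ∞ := by
      calc ∫⁻ x, (‖Rfun R k (fun y => Phi g dQR Ψ k y * |f y|) x *
          Ufun Q g k (fun y => |f y|) x‖₊ : ℝ≥0∞) ∂μ
          ≤ ∫⁻ x, ENNReal.ofReal C * I x ∂μ := lintegral_mono hprod_pt
        _ = ENNReal.ofReal C * ∫⁻ x, I x ∂μ := lintegral_const_mul _ hIm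
        _ < ∞ := ENNReal.mul_lt_top ENNReal.ofReal_lt_top hI_fin.lt_top
    exact hfin
  exact ⟨mem1, mem2⟩

end AsetProofMain

section AsetProofFinal

open ProbabilityTheory

variable {X : Type*} [MeasurableSpace X]

lemma key_main
    (ν : Measure X) (Q : X → Measure X) (hQm : Measurable Q)
    (hQp : ∀ x, IsProbabilityMeasure (Q x))
    (g : ℕ → X → ℝ≥0∞) (hg : ∀ j, Measurable (g j))
    (R : ℕ → X → Measure X) (hRm : ∀ j, Measurable (R j))
    (hRp : ∀ j x, IsProbabilityMeasure (R j x))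
    (dQR : ℕ → X → X → ℝ≥0∞) (hdm : ∀ j, Measurable (Function.uncurry (dQR j)))
    (habs : ∀ j x, Q x = (R j x).withDensity (dQR j x))
    (Ψ : (j : ℕ) → Path X j → ℝ) (hΨm : ∀ j, Measurable (Ψ j)) (hΨpos : ∀ j x, 0 < Ψ j x)
    (hU : ∀ j, 0 < ∫⁻ x, UbarE Q g j x ∂smooth ν Q g j ∧
      ∫⁻ x, UbarE Q g j x ∂smooth ν Q g j < ∞)
    (hgbdd : ∀ j, ∃ c : ℝ, ∀ z, g j z ≤ ENNReal.ofReal c)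
    (hΦbdd : ∀ j, ∃ c : ℝ, ∀ x, |Phi g dQR Ψ j x| ≤ c)
    (k : ℕ) (f : Path X (k + 1) → ℝ) (hf : MemLp f 2 (smooth ν Q g (k + 1))) :
    MemLp (fun x => Ufun Q g k (fun y => |f y|) x) 2 (smooth ν Q g k) ∧
      MemLp (fun x => Rfun R k (fun y => Phi g dQR Ψ k y * |f y|) x *
        Ufun Q g k (fun y => |f y|) x) 1 (smooth ν Q g k) ∧
      MemLp (fun y => Phi g dQR Ψ k y * f y ^ 2) 1 (smooth ν Q g (k + 1)) := by
  obtain ⟨C0, hC0⟩ := hΦbdd k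
  have hC : 0 ≤ max C0 0 := le_max_right _ _
  have hΦb : ∀ y, |Phi g dQR Ψ k y| ≤ max C0 0 := fun y => (hC0 y).trans (le_max_left _ _)
  obtain ⟨cg, hgb⟩ := hgbdd (k + 1)
  have hφ : Measurable (Phi g dQR Ψ k) := measurable_phi hg hdm hΨm k
  have mem3 : MemLp (fun y => Phi g dQR Ψ k y * f y ^ 2) 1 (smooth ν Q g (k + 1)) := by
    rw [memLp_one_iff_integrable]
    exact (hf.integrable_sq).bdd_mul (c := max C0 0) hφ.aestronglyMeasurable
      (Filter.Eventually.of_forall fun y => by rw [Real.norm_eq_abs]; exact hΦb y)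
  have hasm := hf.aestronglyMeasurable
  have hff' : f =ᵐ[smooth ν Q g (k + 1)] hasm.mk f := hasm.ae_eq_mk
  have hf'm : Measurable (hasm.mk f) := hasm.stronglyMeasurable_mk.measurable
  have hf' : MemLp (hasm.mk f) 2 (smooth ν Q g (k + 1)) := (memLp_congr_ae hff').mp hf
  have hfi' : ∫⁻ y, (‖hasm.mk f y‖₊ : ℝ≥0∞) ^ 2 ∂smooth ν Q g (k + 1) ≠ ∞ := by
    have h : (∫⁻ y, (‖hasm.mk f y ^ 2‖₊ : ℝ≥0∞) ∂smooth ν Q g (k + 1)) < ∞ :=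
      hf'.integrable_sq.hasFiniteIntegral
    refine ne_of_lt (lt_of_le_of_lt (le_of_eq ?_) h)
    exact lintegral_congr fun y => by rw [← ENNReal.coe_pow, ← nnnorm_pow]
  obtain ⟨m1', m2'⟩ := key_meas ν Q hQm hQp g hg R hRm hRp dQR hdm habs Ψ hΨm hΨpos k
    (hU k).1.ne' (hU k).2.ne cg hgb (max C0 0) hC hΦb (hasm.mk f) hf'm hfi'
  have hmU : Measurable (Uker Q g k) := measurable_uker Q hQm hQp g hg k cg hgb
  have hNm : MeasurableSet (toMeasurable (smooth ν Q g (k + 1)) {y | ¬ f y = hasm.mk f y}) :=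
    measurableSet_toMeasurable _ _
  have hN0 : smooth ν Q g (k + 1) (toMeasurable (smooth ν Q g (k + 1))
      {y | ¬ f y = hasm.mk f y}) = 0 := by
    rw [measure_toMeasurable]
    exact hff'
  have hae := ae_uker_zero ν Q g hmU (hU k).2.ne hNm hN0
  have hsub : {y | ¬ f y = hasm.mk f y} ⊆
      toMeasurable (smooth ν Q g (k + 1)) {y | ¬ f y = hasm.mk f y} :=
    subset_toMeasurable _ _
  have htrans : ∀ᵐ x ∂smooth ν Q g k,
      Ufun Q g k (fun y => |f y|) x = Ufun Q g k (fun y => |hasm.mk f y|) x ∧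
      Rfun R k (fun y => Phi g dQR Ψ k y * |f y|) x
        = Rfun R k (fun y => Phi g dQR Ψ k y * |hasm.mk f y|) x := by
    filter_upwards [hae] with x hx
    have hUae : ∀ᵐ y ∂Uker Q g k x, f y = hasm.mk f y := by
      have h := measure_mono_null hsub hx
      rwa [← ae_iff] at h
    constructor
    · exact integral_congr_ae (hUae.mono fun y hy => by beta_reduce; rw [hy])
    · refine integral_congr_ae ?_
      filter_upwards [phi_zero_on_null g R dQR Ψ hg hdm hΨm habs k x hNm hx] with y hy
      beta_reduce
      by_cases hyN : y ∈ toMeasurable (smooth ν Q g (k + 1)) {y | ¬ f y = hasm.mk f y}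
      · rw [hy hyN]; simp
      · have heq : f y = hasm.mk f y := by
          by_contra hne
          exact hyN (hsub hne)
        rw [heq]
  refine ⟨?_, ?_, mem3⟩
  · exact (memLp_congr_ae (htrans.mono fun x hx => hx.1)).mpr m1'
  · exact (memLp_congr_ae (htrans.mono fun x hx => by rw [hx.1, hx.2])).mpr m2'

lemma mem_Wt
    (ν : Measure X) (Q : X → Measure X)
    (g : ℕ → X → ℝ≥0∞) (hg : ∀ j, Measurable (g j))
    (dνς : X → ℝ≥0∞) (hdνςm : Measurable dνς)
    (dQR : ℕ → X → X → ℝ≥0∞) (hdm : ∀ j, Measurable (Function.uncurry (dQR j)))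
    (Ψ : (j : ℕ) → Path X j → ℝ) (hΨm : ∀ j, Measurable (Ψ j))
    (hΦ0bdd : ∃ c : ℝ, ∀ x : Path X 0, |(g 0 (x 0) * dνς (x 0)).toReal| ≤ c)
    (hΦbdd : ∀ j, ∃ c : ℝ, ∀ x, |Phi g dQR Ψ j x| ≤ c)
    (k : ℕ) (h : Path X k → ℝ) (hh : MemLp h 1 (smooth ν Q g k)) :
    h ∈ WtSS ν Q g dQR Ψ {f | MemLp f 1 (smooth ν Q g 0) ∧
      MemLp (fun x => (g 0 (x 0) * dνς (x 0)).toReal * f x) 1 (smooth ν Q g 0)} k := by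
  cases k with
  | zero =>
    refine ⟨hh, ?_⟩
    rw [memLp_one_iff_integrable]
    obtain ⟨c, hc⟩ := hΦ0bdd
    exact (memLp_one_iff_integrable.mp hh).bdd_mul (c := c)
      ((((hg 0).comp (measurable_pi_apply 0)).mul
        (hdνςm.comp (measurable_pi_apply 0))).ennreal_toReal).aestronglyMeasurable
      (Filter.Eventually.of_forall fun x => by rw [Real.norm_eq_abs]; exact hc x)
  | succ j =>
    obtain ⟨c, hc⟩ := hΦbdd j
    refine ⟨hh, ?_⟩
    rw [memLp_one_iff_integrable]
    exact (memLp_one_iff_integrable.mp hh).bdd_mul (c := c)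
      (measurable_phi hg hdm hΨm j).aestronglyMeasurable
      (Filter.Eventually.of_forall fun y => by rw [Real.norm_eq_abs]; exact hc y)

end AsetProofFinal

section AsetMaster

open ProbabilityTheory

variable {X : Type*} [MeasurableSpace X]

lemma master
    (ν : Measure X) (Q : X → Measure X) (hQm : Measurable Q)
    (hQp : ∀ x, IsProbabilityMeasure (Q x))
    (g : ℕ → X → ℝ≥0∞) (hg : ∀ j, Measurable (g j))
    (R : ℕ → X → Measure X) (hRm : ∀ j, Measurable (R j))
    (hRp : ∀ j x, IsProbabilityMeasure (R j x))
    (dQR : ℕ → X → X → ℝ≥0∞) (hdm : ∀ j, Measurable (Function.uncurry (dQR j)))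
    (habs : ∀ j x, Q x = (R j x).withDensity (dQR j x))
    (dνς : X → ℝ≥0∞) (hdνςm : Measurable dνς)
    (Ψ : (j : ℕ) → Path X j → ℝ) (hΨm : ∀ j, Measurable (Ψ j)) (hΨpos : ∀ j x, 0 < Ψ j x)
    (hg0 : 0 < ∫⁻ z, g 0 z ∂ν ∧ ∫⁻ z, g 0 z ∂ν < ∞)
    (hU : ∀ j, 0 < ∫⁻ x, UbarE Q g j x ∂smooth ν Q g j ∧
      ∫⁻ x, UbarE Q g j x ∂smooth ν Q g j < ∞)
    (hgbdd : ∀ j, ∃ c : ℝ, ∀ z, g j z ≤ ENNReal.ofReal c)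
    (hΦ0bdd : ∃ c : ℝ, ∀ x : Path X 0, |(g 0 (x 0) * dνς (x 0)).toReal| ≤ c)
    (hΦbdd : ∀ j, ∃ c : ℝ, ∀ x, |Phi g dQR Ψ j x| ≤ c) :
    ∀ k : ℕ,
      (AsetTSS ν Q g R dQR Ψ {f | MemLp f 2 (smooth ν Q g 0)} k =
        {f | MemLp f 2 (smooth ν Q g k)}) ∧
      ({f | MemLp f 2 (smooth ν Q g k)} ⊆
        AsetSS ν Q g R dQR Ψ {f | MemLp f 2 (smooth ν Q g 0)}
          {f | MemLp f 1 (smooth ν Q g 0) ∧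
            MemLp (fun x => (g 0 (x 0) * dνς (x 0)).toReal * f x) 1 (smooth ν Q g 0)} k) := by
  intro k
  induction k with
  | zero => exact ⟨rfl, fun f hf => hf⟩
  | succ k ih =>
    haveI : IsProbabilityMeasure (smooth ν Q g (k + 1)) :=
      smooth_prob ν Q hQm hQp g hg hgbdd hg0 hU (k + 1)
    constructor
    · ext f
      simp only [AsetTSS, Set.mem_setOf_eq]
      constructor
      · exact fun hmem => hmem.1
      · intro hf
        obtain ⟨m1, m2, m3⟩ := key_main ν Q hQm hQp g hg R hRm hRp dQR hdm habs Ψ hΨm hΨpos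
          hU hgbdd hΦbdd k f hf
        exact ⟨hf, m2, by rw [ih.1]; exact m1, m1, m3⟩
    · intro f hf
      simp only [Set.mem_setOf_eq] at hf
      obtain ⟨m1, m2, m3⟩ := key_main ν Q hQm hQp g hg R hRm hRp dQR hdm habs Ψ hΨm hΨpos
        hU hgbdd hΦbdd k f hf
      refine ⟨hf.mono_exponent one_le_two, m2, ih.2 m1, ?_, m3⟩
      exact mem_Wt ν Q g hg dνς hdνςm dQR hdm Ψ hΨm hΦ0bdd hΦbdd k
        (fun x => (Ufun Q g k (fun y => |f y|) x) ^ 2)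
        (memLp_one_iff_integrable.mpr m1.integrable_sq)

end AsetMaster

/-- **Corollary: under A4 the CLT function classes are the full `L²` spaces.**
With `Ã₀ = A₀ := L²(X, π_{0|0})`, for all `k ≥ 1` one has
`A_k = L²(X^{k+1}, π_{k|k})` and `L²(X^{k+1}, π_{k|k}) ⊆ Ã_k`. -/
theorem Aset_eq_L2
    {X : Type*} [MeasurableSpace X]
    (ν ς : Measure X) [IsProbabilityMeasure ν] [IsProbabilityMeasure ς]
    (dνς : X → ℝ≥0∞) (hdνςm : Measurable dνς) (hνς : ν = ς.withDensity dνς)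
    (Q : X → Measure X) (hQm : Measurable Q) (hQp : ∀ x, IsProbabilityMeasure (Q x))
    (g : ℕ → X → ℝ≥0∞) (hg : ∀ j, Measurable (g j))
    (R : ℕ → X → Measure X) (hRm : ∀ j, Measurable (R j))
    (hRp : ∀ j x, IsProbabilityMeasure (R j x))
    (dQR : ℕ → X → X → ℝ≥0∞) (hdm : ∀ j, Measurable (Function.uncurry (dQR j)))
    (habs : ∀ j x, Q x = (R j x).withDensity (dQR j x))
    (Ψ : (j : ℕ) → Path X j → ℝ) (hΨm : ∀ j, Measurable (Ψ j))
    (hΨpos : ∀ j x, 0 < Ψ j x)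
    -- non-degeneracy of the smoothing recursion
    (hg0 : 0 < ∫⁻ z, g 0 z ∂ν ∧ ∫⁻ z, g 0 z ∂ν < ∞)
    (hU : ∀ j, 0 < ∫⁻ x, UbarE Q g j x ∂(smooth ν Q g j) ∧
      ∫⁻ x, UbarE Q g j x ∂(smooth ν Q g j) < ∞)
    -- A4: `‖g_k‖_∞ < ∞` and `‖Φ_k‖_∞ < ∞` for all `k ≥ 0`
    (hgbdd : ∀ j, ∃ c : ℝ, ∀ z, g j z ≤ ENNReal.ofReal c)
    (hΦ0bdd : ∃ c : ℝ, ∀ x : Path X 0, |(g 0 (x 0) * dνς (x 0)).toReal| ≤ c)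
    (hΦbdd : ∀ j, ∃ c : ℝ, ∀ x, |Phi g dQR Ψ j x| ≤ c) :
    ∀ k : ℕ, 1 ≤ k →
      (AsetTSS ν Q g R dQR Ψ {f | MemLp f 2 (smooth ν Q g 0)} k =
        {f | MemLp f 2 (smooth ν Q g k)}) ∧
      ({f | MemLp f 2 (smooth ν Q g k)} ⊆
        AsetSS ν Q g R dQR Ψ {f | MemLp f 2 (smooth ν Q g 0)}
          {f | MemLp f 1 (smooth ν Q g 0) ∧
            MemLp (fun x => (g 0 (x 0) * dνς (x 0)).toReal * f x) 1 (smooth ν Q g 0)} k) := by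
  intro k _
  exact master ν Q hQm hQp g hg R hRm hRp dQR hdm habs dνς hdνςm Ψ hΨm hΨpos hg0 hU hgbdd
    hΦ0bdd hΦbdd k

end APF
end
end

section
/- (Correctness of the APF second-stage weights.) Let (X, 𝒳) be a measurable space with measurable singletons, let ξ^1, …, ξ^N ∈ X^{k+1} be points with pairwise distinct first k+1-coordinate blocks, and let ω^1, …, ω^N and τ^1, …, τ^N be positive reals. Let Q and R be Markov kernels on X with Q(x,·) ≪ R(x,·) for all x, let g : X → [0,∞) be measurable, set U(x_{0:k}, A) := ∫_A g(x'_{k+1}) δ_{x_{0:k}}(dx'_{0:k}) Q(x'_k, dx'_{k+1}), Ū(x_{0:k}) := U(x_{0:k}, X^{k+2}), P(x_{0:k}, ·) := U(x_{0:k}, ·)/Ū(x_{0:k}), and let R̄(x_{0:k}, ·) extend the path by a draw from R(x_k, ·). Assume Ū(ξ^i) ∈ (0, ∞) for all i. Define the target Φ̄(A) := Σ_{i=1}^N [ω^i Ū(ξ^i) / Σ_{j} ω^j Ū(ξ^j)] P(ξ^i, A) and the proposal ρ(A) := Σ_{i=1}^N [ω^i τ^i / Σ_{j} ω^j τ^j]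 R̄(ξ^i, A). Then Φ̄ ≪ ρ and, ρ-almost everywhere, dΦ̄/dρ(x_{0:k+1}) = c · Σ_{i=1}^N 1{x_{0:k} = ξ^i} · g(x_{k+1}) [dQ(x_k,·)/dR(x_k,·)](x_{k+1}) / τ^i, with normalising constant c = Σ_j ω^j τ^j / Σ_j ω^j Ū(ξ^j). -/
open MeasureTheory ProbabilityTheory Filter
open scoped ENNReal NNReal Topology

noncomputable section

namespace APF

open MeasureTheory
open scoped ENNReal Classical

/-- Mapping commutes with `withDensity`: pushing forward a density taken along
the map equals taking the density after the pushforward. -/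
lemma map_withDensity_aux {α β : Type*} [MeasurableSpace α] [MeasurableSpace β]
    (μ : Measure α) {e : α → β} (he : Measurable e) {f : β → ℝ≥0∞}
    (hf : Measurable f) :
    (μ.map e).withDensity f = (μ.withDensity fun a => f (e a)).map e := by
  ext s hs
  rw [withDensity_apply _ hs, Measure.map_apply he hs,
    withDensity_apply _ (he hs), setLIntegral_map hs hf he]

/-- `Fin.snoc x` is measurable as a function of the appended coordinate. -/
lemma measurable_snoc_aux {X : Type*} [MeasurableSpace X] {k : ℕ} (x : Path X k) :
    Measurable (fun y : X => (Fin.snoc x y : Path X (k + 1))) := by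
  refine measurable_pi_lambda _ fun a => ?_
  refine Fin.lastCases ?_ ?_ a
  · simp only [Fin.snoc_last]; exact measurable_id
  · intro b; simp only [Fin.snoc_castSucc]; exact measurable_const

/-- **Correctness of the APF second-stage weights.**  Given a weighted sample
`{(ξ^i, ω^i)}` with pairwise distinct particle locations, first-stage weights
`τ^i` and proposal kernel `R`, the one-step plug-in Bayes update
`Φ̄ = Σ_i [ω^i Ū(ξ^i)/Σ_j ω^j Ū(ξ^j)] P(ξ^i, ·)` is absolutely continuous
with respect to the auxiliary proposal
`ρ = Σ_i [ω^i τ^i/Σ_j ω^j τ^j] R̄(ξ^i, ·)`, with density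
`dΦ̄/dρ(x_{0:k+1}) = c · Σ_i 1{x_{0:k} = ξ^i} g(x_{k+1}) (dQ(x_k,·)/dR(x_k,·))(x_{k+1})/τ^i`
where `c = Σ_j ω^j τ^j / Σ_j ω^j Ū(ξ^j)`. -/
theorem apf_second_stage_weights_correct
    {X : Type*} [MeasurableSpace X] [MeasurableSingletonClass X]
    (k N : ℕ) (hN : 1 ≤ N) (ξ : Fin N → Path X k) (hξ : Function.Injective ξ)
    (ω τ : Fin N → ℝ) (hω : ∀ i, 0 < ω i) (hτ : ∀ i, 0 < τ i)
    (Q R : X → Measure X) (hQm : Measurable Q) (hRm : Measurable R)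
    (hQp : ∀ x, IsProbabilityMeasure (Q x)) (hRp : ∀ x, IsProbabilityMeasure (R x))
    (dQR : X → X → ℝ≥0∞) (hdm : Measurable (Function.uncurry dQR))
    (habs : ∀ x, Q x = (R x).withDensity (dQR x))
    (g : X → ℝ≥0∞) (hg : Measurable g)
    (hU : ∀ i, UbarE Q (fun _ => g) k (ξ i) ≠ 0 ∧ UbarE Q (fun _ => g) k (ξ i) ≠ ∞) :
    (Measure.sum fun i =>
        (ENNReal.ofReal (ω i) * UbarE Q (fun _ => g) k (ξ i) /
            ∑ j, ENNReal.ofReal (ω j) * UbarE Q (fun _ => g) k (ξ j)) •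
          ((UbarE Q (fun _ => g) k (ξ i))⁻¹ • Uker Q (fun _ => g) k (ξ i)))
      ≪ (Measure.sum fun i =>
        (ENNReal.ofReal (ω i * τ i) / ∑ j, ENNReal.ofReal (ω j * τ j)) •
          Rbar (fun _ => R) k (ξ i)) ∧
    (Measure.sum fun i =>
        (ENNReal.ofReal (ω i) * UbarE Q (fun _ => g) k (ξ i) /
            ∑ j, ENNReal.ofReal (ω j) * UbarE Q (fun _ => g) k (ξ j)) •
          ((UbarE Q (fun _ => g) k (ξ i))⁻¹ • Uker Q (fun _ => g) k (ξ i)))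
      = (Measure.sum fun i =>
          (ENNReal.ofReal (ω i * τ i) / ∑ j, ENNReal.ofReal (ω j * τ j)) •
            Rbar (fun _ => R) k (ξ i)).withDensity
        (fun x =>
          ((∑ j, ENNReal.ofReal (ω j * τ j)) /
              ∑ j, ENNReal.ofReal (ω j) * UbarE Q (fun _ => g) k (ξ j)) *
            ∑ i, (if Fin.init x = ξ i then
              g (x (Fin.last (k + 1))) *
                dQR (x ((Fin.last k).castSucc)) (x (Fin.last (k + 1))) /
                ENNReal.ofReal (τ i)
              else 0)) := by
  classical
  -- abbreviations
  set SU : ℝ≥0∞ := ∑ j, ENNReal.ofReal (ω j) * UbarE Q (fun _ => g) k (ξ j) with hSUdef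
  set Sτ : ℝ≥0∞ := ∑ j, ENNReal.ofReal (ω j * τ j) with hSτdef
  set F : Path X (k + 1) → ℝ≥0∞ := fun x =>
    (Sτ / SU) *
      ∑ i, (if Fin.init x = ξ i then
        g (x (Fin.last (k + 1))) *
          dQR (x ((Fin.last k).castSucc)) (x (Fin.last (k + 1))) /
          ENNReal.ofReal (τ i)
        else 0) with hFdef
  -- basic positivity/finiteness facts
  have hSU0 : SU ≠ 0 := by
    intro h
    have h0 := (Finset.sum_eq_zero_iff.mp h) ⟨0, hN⟩ (Finset.mem_univ _)
    exact mul_ne_zero (ENNReal.ofReal_pos.mpr (hω _)).ne' (hU ⟨0, hN⟩).1 h0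
  have hSUtop : SU ≠ ∞ := by
    refine (ENNReal.sum_lt_top.mpr fun j _ => ?_).ne
    exact ENNReal.mul_lt_top ENNReal.ofReal_lt_top (lt_top_iff_ne_top.mpr (hU j).2)
  have hSτ0 : Sτ ≠ 0 := by
    intro h
    have h0 := (Finset.sum_eq_zero_iff.mp h) ⟨0, hN⟩ (Finset.mem_univ _)
    exact (ENNReal.ofReal_pos.mpr (mul_pos (hω _) (hτ _))).ne' h0
  have hSτtop : Sτ ≠ ∞ := by
    refine (ENNReal.sum_lt_top.mpr fun j _ => ?_).ne
    exact ENNReal.ofReal_lt_top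
  -- measurability of the claimed density
  have hF : Measurable F := by
    refine Measurable.mul measurable_const ?_
    refine Finset.measurable_sum _ fun i _ => ?_
    have hcond : MeasurableSet {x : Path X (k + 1) | Fin.init x = ξ i} := by
      have hinit : Measurable (Fin.init : Path X (k + 1) → Path X k) :=
        measurable_pi_lambda _ fun a => measurable_pi_apply _
      exact hinit (measurableSet_singleton (ξ i))
    refine Measurable.ite hcond ?_ measurable_const
    refine Measurable.div ?_ measurable_const
    refine Measurable.mul (hg.comp (measurable_pi_apply _)) ?_
    have h4 : (fun x : Path X (k + 1) =>
        dQR (x ((Fin.last k).castSucc)) (x (Fin.last (k + 1))))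
        = Function.uncurry dQR ∘
          (fun x => (x ((Fin.last k).castSucc), x (Fin.last (k + 1)))) := rfl
    rw [h4]
    exact hdm.comp ((measurable_pi_apply _).prodMk (measurable_pi_apply _))
  -- the per-index identity
  have key : ∀ i : Fin N,
      (ENNReal.ofReal (ω i) * UbarE Q (fun _ => g) k (ξ i) / SU) •
          ((UbarE Q (fun _ => g) k (ξ i))⁻¹ • Uker Q (fun _ => g) k (ξ i))
        = (ENNReal.ofReal (ω i * τ i) / Sτ) •
            (Rbar (fun _ => R) k (ξ i)).withDensity F := by
    intro i
    set x : X := ξ i (Fin.last k) with hxdef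
    have hsnoc : Measurable (fun y : X => (Fin.snoc (ξ i) y : Path X (k + 1))) :=
      measurable_snoc_aux (ξ i)
    have hd : Measurable (dQR x) := by
      have : (dQR x) = Function.uncurry dQR ∘ fun y => (x, y) := rfl
      rw [this]; exact hdm.comp (measurable_const.prodMk measurable_id)
    -- compute the density pulled back along `Fin.snoc (ξ i)`
    have hFe : (fun y : X => F (Fin.snoc (ξ i) y))
        = fun y => (Sτ / SU * (ENNReal.ofReal (τ i))⁻¹) * (dQR x y * g y) := by
      funext y
      simp only [hFdef, Fin.init_snoc, Fin.snoc_last, Fin.snoc_castSucc, hξ.eq_iff,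
        Finset.sum_ite_eq, Finset.sum_ite_eq', Finset.mem_univ, if_true]
      simp only [div_eq_mul_inv]
      ring
    -- rewrite the right-hand measure
    have hRbar : (Rbar (fun _ => R) k (ξ i)).withDensity F
        = (Sτ / SU * (ENNReal.ofReal (τ i))⁻¹) • Uker Q (fun _ => g) k (ξ i) := by
      have h1 : (Rbar (fun _ => R) k (ξ i)).withDensity F
          = ((R x).withDensity fun y => F (Fin.snoc (ξ i) y)).map (Fin.snoc (ξ i)) := by
        rw [Rbar, map_withDensity_aux _ hsnoc hF]
      rw [h1, hFe]
      have hc : (Sτ / SU * (ENNReal.ofReal (τ i))⁻¹) ≠ ∞ := by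
        refine ENNReal.mul_ne_top ?_ ?_
        · exact ENNReal.mul_ne_top hSτtop (ENNReal.inv_ne_top.mpr hSU0)
        · exact ENNReal.inv_ne_top.mpr (ENNReal.ofReal_pos.mpr (hτ i)).ne'
      have h2 : ((R x).withDensity fun y =>
            (Sτ / SU * (ENNReal.ofReal (τ i))⁻¹) * (dQR x y * g y))
          = (Sτ / SU * (ENNReal.ofReal (τ i))⁻¹) •
              ((R x).withDensity fun y => dQR x y * g y) := by
        exact withDensity_smul' _ _ hc
      rw [h2]
      have h3 : ((R x).withDensity fun y => dQR x y * g y)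
          = (Q x).withDensity g := by
        have := withDensity_mul (R x) hd hg
        rw [habs x]
        calc ((R x).withDensity fun y => dQR x y * g y)
            = (R x).withDensity (dQR x * g) := rfl
          _ = ((R x).withDensity (dQR x)).withDensity g := withDensity_mul (R x) hd hg
      rw [h3, Measure.map_smul, Uker]
    rw [hRbar, smul_smul, smul_smul]
    congr 1
    -- scalar identity in `ℝ≥0∞`
    have hUc : UbarE Q (fun _ => g) k (ξ i) * (UbarE Q (fun _ => g) k (ξ i))⁻¹ = 1 :=
      ENNReal.mul_inv_cancel (hU i).1 (hU i).2
    have htc : ENNReal.ofReal (τ i) * (ENNReal.ofReal (τ i))⁻¹ = 1 :=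
      ENNReal.mul_inv_cancel (ENNReal.ofReal_pos.mpr (hτ i)).ne'
        ENNReal.ofReal_ne_top
    have hSc : Sτ⁻¹ * Sτ = 1 := ENNReal.inv_mul_cancel hSτ0 hSτtop
    rw [ENNReal.ofReal_mul (hω i).le]
    simp only [div_eq_mul_inv]
    calc ENNReal.ofReal (ω i) * UbarE Q (fun _ => g) k (ξ i) * SU⁻¹ *
          (UbarE Q (fun _ => g) k (ξ i))⁻¹
        = ENNReal.ofReal (ω i) * SU⁻¹ *
            (UbarE Q (fun _ => g) k (ξ i) * (UbarE Q (fun _ => g) k (ξ i))⁻¹) := by ring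
      _ = ENNReal.ofReal (ω i) * SU⁻¹ := by rw [hUc, mul_one]
      _ = ENNReal.ofReal (ω i) * SU⁻¹ * (ENNReal.ofReal (τ i) * (ENNReal.ofReal (τ i))⁻¹)
            * (Sτ⁻¹ * Sτ) := by rw [htc, hSc, mul_one, mul_one]
      _ = ENNReal.ofReal (ω i) * ENNReal.ofReal (τ i) * Sτ⁻¹ *
            (Sτ * SU⁻¹ * (ENNReal.ofReal (τ i))⁻¹) := by ring
  -- the equality of measures
  have heq :
      (Measure.sum fun i =>
          (ENNReal.ofReal (ω i) * UbarE Q (fun _ => g) k (ξ i) / SU) •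
            ((UbarE Q (fun _ => g) k (ξ i))⁻¹ • Uker Q (fun _ => g) k (ξ i)))
        = (Measure.sum fun i =>
            (ENNReal.ofReal (ω i * τ i) / Sτ) • Rbar (fun _ => R) k (ξ i)).withDensity F := by
    rw [withDensity_sum]
    congr 1
    funext i
    rw [withDensity_smul_measure, key i]
  refine ⟨?_, heq⟩
  rw [heq]
  exact withDensity_absolutelyContinuous _ _

end APF
end
end

section
/- (One-step target identity for the first-stage reweighting.) Let π be a probability measure on X^{k+1}, Ψ : X^{k+1} → (0,∞) measurable with 0 < πΨ < ∞, and let μ be the probability measure with dμ/dπ = Ψ/πΨ. Let Q and R be Markov kernels on X with Q(x,·) ≪ R(x,·) for all x, g : X → [0,∞) measurable, U(x_{0:k}, A) := ∫_A g(x'_{k+1}) δ_{x_{0:k}}(dx'_{0:k}) Q(x'_k, dx'_{k+1}), Ū := U(·, X^{k+2}), let R̄(x_{0:k}, ·) extend the path by a draw from R(x_k, ·), and let Φ(x_{0:k+1}) := g(x_{k+1}) [dQ(x_k,·)/dR(x_k,·)](x_{k+1}) / Ψ(x_{0:k}). Assume 0 < πŪ < ∞. Then for every measurable A ⊆ X^{k+2}: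 μ R̄(Φ 1_A) / μ R̄ Φ = π U(A) / π Ū; in particular, if π = π_{k|k} then this common value is π_{k+1|k+1}(A). -/
open MeasureTheory ProbabilityTheory Filter
open scoped ENNReal NNReal Topology

noncomputable section

namespace APF

open MeasureTheory
open scoped ENNReal

private lemma measurable_snoc_pair {X : Type*} [MeasurableSpace X] (k : ℕ) :
    Measurable (fun p : Path X k × X => (Fin.snoc p.1 p.2 : Path X (k + 1))) := by
  apply measurable_pi_lambda
  intro i
  cases i using Fin.lastCases with
  | last => simpa [Fin.snoc_last] using measurable_snd
  | cast j => simp only [Fin.snoc_castSucc]; exact (measurable_pi_apply j).comp measurable_fst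

set_option maxHeartbeats 1000000

/-- **One-step target identity for the first-stage reweighting.**  Reweighting
`π` by an arbitrary positive first-stage weight function `Ψ` (giving
`dμ/dπ = Ψ/πΨ`), proposing through `R` and reweighting by the induced
second-stage weight `Φ` leaves the one-step Bayes update of `π` invariant:
for every measurable `A ⊆ X^{k+2}`, `μR̄(Φ1_A)/μR̄Φ = πU(A)/πŪ`; in
particular, if `π = π_{k|k}` this common value is `π_{k+1|k+1}(A)`. -/
theorem one_step_target_identity
    {X : Type*} [MeasurableSpace X] (k : ℕ)
    (ν : Measure X) [IsProbabilityMeasure ν]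
    (Q : X → Measure X) (hQm : Measurable Q) (hQp : ∀ x, IsProbabilityMeasure (Q x))
    (g : ℕ → X → ℝ≥0∞) (hg : ∀ j, Measurable (g j))
    (R : ℕ → X → Measure X) (hRm : ∀ j, Measurable (R j))
    (hRp : ∀ j x, IsProbabilityMeasure (R j x))
    (dQR : ℕ → X → X → ℝ≥0∞) (hdm : ∀ j, Measurable (Function.uncurry (dQR j)))
    (habs : ∀ j x, Q x = (R j x).withDensity (dQR j x))
    (π : Measure (Path X k)) [IsProbabilityMeasure π]
    (Ψ : Path X k → ℝ) (hΨm : Measurable Ψ) (hΨpos : ∀ x, 0 < Ψ x)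
    (hΨint : 0 < ∫⁻ x, ENNReal.ofReal (Ψ x) ∂π ∧ ∫⁻ x, ENNReal.ofReal (Ψ x) ∂π < ∞)
    (hUint : 0 < (π.bind (Uker Q g k)) Set.univ ∧ (π.bind (Uker Q g k)) Set.univ < ∞) :
    ∀ A : Set (Path X (k + 1)), MeasurableSet A →
      ((normalize (π.withDensity fun x => ENNReal.ofReal (Ψ x))).bind
          (fun x => (Rbar R k x).withDensity fun y =>
            g (k + 1) (y (Fin.last (k + 1))) *
              dQR k (y ((Fin.last k).castSucc)) (y (Fin.last (k + 1))) /
              ENNReal.ofReal (Ψ (Fin.init y)))) A /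
        ((normalize (π.withDensity fun x => ENNReal.ofReal (Ψ x))).bind
          (fun x => (Rbar R k x).withDensity fun y =>
            g (k + 1) (y (Fin.last (k + 1))) *
              dQR k (y ((Fin.last k).castSucc)) (y (Fin.last (k + 1))) /
              ENNReal.ofReal (Ψ (Fin.init y)))) Set.univ =
        (π.bind (Uker Q g k)) A / (π.bind (Uker Q g k)) Set.univ ∧
      (π = smooth ν Q g k →
        (π.bind (Uker Q g k)) A / (π.bind (Uker Q g k)) Set.univ =
          smooth ν Q g (k + 1) A) := by
  intro A hA
  have hc0 : ∀ x : Path X k, ENNReal.ofReal (Ψ x) ≠ 0 :=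
    fun x => (ENNReal.ofReal_pos.mpr (hΨpos x)).ne'
  have hctop : ∀ x : Path X k, ENNReal.ofReal (Ψ x) ≠ ∞ := fun _ => ENNReal.ofReal_ne_top
  have hsnoc : ∀ x : Path X k, Measurable (fun z : X => (Fin.snoc x z : Path X (k + 1))) := by
    intro x
    have : (fun z : X => (Fin.snoc x z : Path X (k + 1))) =
        (fun p : Path X k × X => (Fin.snoc p.1 p.2 : Path X (k + 1))) ∘ fun z => (x, z) := rfl
    rw [this]
    exact (measurable_snoc_pair k).comp (measurable_const.prodMk measurable_id)
  have hinit : Measurable (fun y : Path X (k + 1) => (Fin.init y : Path X k)) :=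
    measurable_pi_lambda _ fun i => measurable_pi_apply _
  set W : Path X (k + 1) → ℝ≥0∞ := fun y =>
      g (k + 1) (y (Fin.last (k + 1))) *
        dQR k (y ((Fin.last k).castSucc)) (y (Fin.last (k + 1))) /
        ENNReal.ofReal (Ψ (Fin.init y)) with hWdef
  have hWm : Measurable W := by
    have h1 : Measurable fun y : Path X (k + 1) => g (k + 1) (y (Fin.last (k + 1))) :=
      (hg (k + 1)).comp (measurable_pi_apply _)
    have h2' : Measurable (Function.uncurry (dQR k) ∘
        fun y : Path X (k + 1) => (y ((Fin.last k).castSucc), y (Fin.last (k + 1)))) :=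
      (hdm k).comp ((measurable_pi_apply _).prodMk (measurable_pi_apply _))
    have h2 : Measurable fun y : Path X (k + 1) =>
        dQR k (y ((Fin.last k).castSucc)) (y (Fin.last (k + 1))) := h2'
    have h3 : Measurable fun y : Path X (k + 1) => ENNReal.ofReal (Ψ (Fin.init y)) :=
      ENNReal.measurable_ofReal.comp (hΨm.comp hinit)
    exact (h1.mul h2).div h3
  -- the key pointwise identity
  have key : ∀ x : Path X k, (Rbar R k x).withDensity W =
      (ENNReal.ofReal (Ψ x))⁻¹ • Uker Q g k x := by
    intro x
    have hinvtop : (ENNReal.ofReal (Ψ x))⁻¹ ≠ ∞ := ENNReal.inv_ne_top.mpr (hc0 x)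
    ext B hB
    have hdz : Measurable (dQR k (x (Fin.last k))) :=
      (hdm k).comp (measurable_const.prodMk measurable_id)
    rw [withDensity_apply _ hB, Rbar, Measure.restrict_map (hsnoc x) hB,
      lintegral_map hWm (hsnoc x)]
    have hcalc : ∀ z, W (Fin.snoc x z) =
        (ENNReal.ofReal (Ψ x))⁻¹ *
          (dQR k (x (Fin.last k)) z * g (k + 1) z) := by
      intro z
      simp only [hWdef, Fin.snoc_last, Fin.snoc_castSucc, Fin.init_snoc]
      rw [ENNReal.div_eq_inv_mul, mul_comm (g (k + 1) z)]
    rw [lintegral_congr hcalc, lintegral_const_mul' _ _ hinvtop,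
      Measure.smul_apply, smul_eq_mul, Uker, Measure.map_apply (hsnoc x) hB,
      withDensity_apply _ ((hsnoc x) hB), habs k (x (Fin.last k)),
      setLIntegral_withDensity_eq_setLIntegral_mul _ hdz (hg (k + 1)) ((hsnoc x) hB)]
    rfl
  -- measurability of `Uker`
  have hUm : Measurable (Uker Q g k) := by
    apply Measure.measurable_of_measurable_coe
    intro s hs
    have hrepr : ∀ x : Path X k, Uker Q g k x s =
        ∫⁻ z, s.indicator (fun _ => (1 : ℝ≥0∞)) (Fin.snoc x z) * g (k + 1) z
          ∂(Q (x (Fin.last k))) := by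
      intro x
      rw [Uker, Measure.map_apply (hsnoc x) hs, withDensity_apply _ ((hsnoc x) hs),
        ← lintegral_indicator ((hsnoc x) hs)]
      refine lintegral_congr fun z => ?_
      by_cases hzs : Fin.snoc x z ∈ s <;>
        simp [Set.indicator_of_mem, Set.indicator_of_notMem, hzs]
    simp_rw [hrepr]
    let κ : Kernel (Path X k) X := ⟨fun x => Q (x (Fin.last k)),
      hQm.comp (measurable_pi_apply _)⟩
    haveI : IsMarkovKernel κ := ⟨fun x => hQp _⟩
    exact Measurable.lintegral_kernel_prod_right (κ := κ)
      (((measurable_const.indicator hs).comp (measurable_snoc_pair k)).mul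
        ((hg (k + 1)).comp measurable_snd))
  -- measurability of the reweighted kernel
  have hF : Measurable (fun x : Path X k => (ENNReal.ofReal (Ψ x))⁻¹ • Uker Q g k x) := by
    apply Measure.measurable_of_measurable_coe
    intro s hs
    simp only [Measure.smul_apply, smul_eq_mul]
    exact ((ENNReal.measurable_ofReal.comp hΨm).inv).mul
      ((Measure.measurable_coe hs).comp hUm)
  have keyfun : (fun x : Path X k => (Rbar R k x).withDensity W) =
      fun x => (ENNReal.ofReal (Ψ x))⁻¹ • Uker Q g k x := funext key
  -- bind computation
  have hμbind : ∀ B : Set (Path X (k + 1)), MeasurableSet B →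
      ((normalize (π.withDensity fun x => ENNReal.ofReal (Ψ x))).bind
        (fun x => (Rbar R k x).withDensity W)) B =
      (∫⁻ x, ENNReal.ofReal (Ψ x) ∂π)⁻¹ * (π.bind (Uker Q g k)) B := by
    intro B hB
    have huniv : (π.withDensity fun x => ENNReal.ofReal (Ψ x)) Set.univ =
        ∫⁻ x, ENNReal.ofReal (Ψ x) ∂π := by
      rw [withDensity_apply _ MeasurableSet.univ, setLIntegral_univ]
    have hint : Measurable (fun x : Path X k =>
        ((ENNReal.ofReal (Ψ x))⁻¹ • Uker Q g k x) B) := (Measure.measurable_coe hB).comp hF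
    rw [keyfun, Measure.bind_apply hB hF.aemeasurable, normalize, huniv,
      lintegral_smul_measure]
    congr 1
    rw [lintegral_withDensity_eq_lintegral_mul π
        (f := fun x => ENNReal.ofReal (Ψ x)) (ENNReal.measurable_ofReal.comp hΨm) hint,
      Measure.bind_apply hB hUm.aemeasurable]
    refine lintegral_congr fun x => ?_
    simp only [Pi.mul_apply, Measure.smul_apply, smul_eq_mul, ← mul_assoc,
      ENNReal.mul_inv_cancel (hc0 x) (hctop x), one_mul]
  constructor
  · rw [hμbind A hA, hμbind Set.univ MeasurableSet.univ]
    exact ENNReal.mul_div_mul_left _ _ (ENNReal.inv_ne_zero.mpr hΨint.2.ne)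
      (ENNReal.inv_ne_top.mpr hΨint.1.ne')
  · intro hπ
    have hsm : smooth ν Q g (k + 1) = normalize ((smooth ν Q g k).bind (Uker Q g k)) := rfl
    rw [hsm, ← hπ, normalize, Measure.smul_apply, smul_eq_mul, ENNReal.div_eq_inv_mul]

end APF
end
end
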